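/- There exists N such that for all natural numbers m ≥ N, (Finset.range (m+1)).sum (fun j => (m.choose j) * ((2*m).choose (m−j)) * ((3*m−j).choose m)) ≤ (0.88 : ℝ)^m * ((3*m).choose m)^2. -/

import Mathlib

lemma choose_saddle (n k : ℕ) (hk : k ≤ n) (x : ℝ) (h0 : 0 < x) (h1 : x < 1) :
    (n.choose k : ℝ) * (x ^ k * (1 - x) ^ (n - k)) ≤ 1 := by
  have hx1 : (0:ℝ) < 1 - x := by linarith
  have h2 : x ^ k * (1 - x) ^ (n - k) * (n.choose k : ℝ) ≤ ∑ i ∈ Finset.range (n + 1),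
      x ^ i * (1 - x) ^ (n - i) * (n.choose i : ℝ) := by
    apply Finset.single_le_sum (f := fun i => x ^ i * (1 - x) ^ (n - i) * (n.choose i : ℝ))
    · intro i _
      positivity
    · simpa using Nat.lt_succ_of_le hk
  have h3 : ((x + (1 - x)) : ℝ) ^ n = ∑ i ∈ Finset.range (n + 1),
      x ^ i * (1 - x) ^ (n - i) * (n.choose i : ℝ) := add_pow x (1 - x) n
  have h4 : ((x + (1 - x)) : ℝ) ^ n = 1 := by norm_num
  nlinarith [h2]

lemma cone_bound (U V : ℝ) (hU : 0 < U) (hV : 0 < V) (D a b i j : ℕ)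
    (hab : a < b) (hbD : b ≤ D)
    (h1 : a * (i + j) ≤ D * j) (h2 : D * j ≤ b * (i + j))
    (c1 : 1 ≤ U ^ (D - a) * V ^ a) (c2 : 1 ≤ U ^ (D - b) * V ^ b) :
    1 ≤ U ^ i * V ^ j := by
  set t := b * (i + j) - D * j with ht
  set s := D * j - a * (i + j) with hs
  have haD : a ≤ D := le_trans hab.le hbD
  have hN : 0 < D * (b - a) := Nat.mul_pos (by omega) (by omega)
  have e1 : (D - a) * t + (D - b) * s = i * (D * (b - a)) := by
    zify [ht, hs, hab.le, hbD, haD, h1, h2]; ring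
  have e2 : a * t + b * s = j * (D * (b - a)) := by
    zify [ht, hs, hab.le, hbD, haD, h1, h2]; ring
  have key : (U ^ i * V ^ j) ^ (D * (b - a)) =
      (U ^ (D - a) * V ^ a) ^ t * (U ^ (D - b) * V ^ b) ^ s := by
    rw [mul_pow, mul_pow, mul_pow, ← pow_mul, ← pow_mul, ← pow_mul, ← pow_mul, ← pow_mul,
      ← pow_mul, mul_mul_mul_comm, ← pow_add, ← pow_add, e1, e2]
  have hge : 1 ≤ (U ^ i * V ^ j) ^ (D * (b - a)) := by
    rw [key]
    have t1 : (1:ℝ) ≤ (U ^ (D - a) * V ^ a) ^ t := one_le_pow₀ c1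
    have t2 : (1:ℝ) ≤ (U ^ (D - b) * V ^ b) ^ s := one_le_pow₀ c2
    nlinarith
  by_contra hcon
  push_neg at hcon
  have : (U ^ i * V ^ j) ^ (D * (b - a)) < 1 :=
    pow_lt_one₀ (by positivity) hcon hN.ne'
  linarith

lemma term_bound (x y z : ℝ) (hx0 : 0 < x) (hx1 : x < 1) (hy0 : 0 < y) (hy1 : y < 1)
    (hz0 : 0 < z) (hz1 : z < 1) (a b : ℕ) (hab : a < b) (hbD : b ≤ 1000)
    (c1 : 1 ≤ ((4009/100:ℝ) * (1-x)*y*(1-y)*z*(1-z)^2) ^ (1000 - a) *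
        ((4009/100:ℝ)*x*(1-y)^2*z*(1-z)) ^ a)
    (c2 : 1 ≤ ((4009/100:ℝ) * (1-x)*y*(1-y)*z*(1-z)^2) ^ (1000 - b) *
        ((4009/100:ℝ)*x*(1-y)^2*z*(1-z)) ^ b)
    (i j : ℕ) (h1 : a * (i + j) ≤ 1000 * j) (h2 : 1000 * j ≤ b * (i + j)) :
    ((i+j).choose j : ℝ) * ((2*(i+j)).choose i : ℝ) * ((3*i+2*j).choose (i+j) : ℝ)
      ≤ (4009/100:ℝ) ^ (i+j) := by
  have hx1' : (0:ℝ) < 1 - x := by linarith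
  have hy1' : (0:ℝ) < 1 - y := by linarith
  have hz1' : (0:ℝ) < 1 - z := by linarith
  have s1 : ((i+j).choose j : ℝ) * (x ^ j * (1-x) ^ i) ≤ 1 := by
    have := choose_saddle (i+j) j (Nat.le_add_left j i) x hx0 hx1
    simpa using this
  have s2 : ((2*(i+j)).choose i : ℝ) * (y ^ i * (1-y) ^ (i+2*j)) ≤ 1 := by
    have e : 2*(i+j) - i = i + 2*j := by omega
    have := choose_saddle (2*(i+j)) i (by omega) y hy0 hy1
    rwa [e] at this
  have s3 : ((3*i+2*j).choose (i+j) : ℝ) * (z ^ (i+j) * (1-z) ^ (2*i+j)) ≤ 1 := by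
    have e : 3*i+2*j - (i+j) = 2*i + j := by omega
    have := choose_saddle (3*i+2*j) (i+j) (by omega) z hz0 hz1
    rwa [e] at this
  set X : ℝ := (x ^ j * (1-x) ^ i) * (y ^ i * (1-y) ^ (i+2*j)) * (z ^ (i+j) * (1-z) ^ (2*i+j))
    with hX
  have hXpos : 0 < X := by positivity
  have hTX : ((i+j).choose j : ℝ) * ((2*(i+j)).choose i : ℝ) * ((3*i+2*j).choose (i+j) : ℝ) * X
      ≤ 1 := by
    have e : ((i+j).choose j : ℝ) * ((2*(i+j)).choose i : ℝ) * ((3*i+2*j).choose (i+j) : ℝ) * X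
        = (((i+j).choose j : ℝ) * (x ^ j * (1-x) ^ i)) *
          (((2*(i+j)).choose i : ℝ) * (y ^ i * (1-y) ^ (i+2*j))) *
          (((3*i+2*j).choose (i+j) : ℝ) * (z ^ (i+j) * (1-z) ^ (2*i+j))) := by
      rw [hX]; ring
    rw [e]
    have n1 : (0:ℝ) ≤ ((i+j).choose j : ℝ) * (x ^ j * (1-x) ^ i) := by positivity
    have n2 : (0:ℝ) ≤ ((2*(i+j)).choose i : ℝ) * (y ^ i * (1-y) ^ (i+2*j)) := by positivity
    have n3 : (0:ℝ) ≤ ((3*i+2*j).choose (i+j) : ℝ) * (z ^ (i+j) * (1-z) ^ (2*i+j)) := by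
      positivity
    exact mul_le_one₀ (mul_le_one₀ s1 n2 s2) n3 s3
  have hUV : 1 ≤ ((4009/100:ℝ) * (1-x)*y*(1-y)*z*(1-z)^2) ^ i *
      ((4009/100:ℝ)*x*(1-y)^2*z*(1-z)) ^ j :=
    cone_bound _ _ (by positivity) (by positivity) 1000 a b i j hab hbD h1 h2 c1 c2
  have hId : ((4009/100:ℝ) * (1-x)*y*(1-y)*z*(1-z)^2) ^ i *
      ((4009/100:ℝ)*x*(1-y)^2*z*(1-z)) ^ j = (4009/100:ℝ) ^ (i+j) * X := by
    simp only [mul_pow, ← pow_mul, hX]; ring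
  apply le_of_mul_le_mul_right _ hXpos
  calc ((i+j).choose j : ℝ) * ((2*(i+j)).choose i : ℝ) * ((3*i+2*j).choose (i+j) : ℝ) * X
      ≤ 1 := hTX
    _ ≤ (4009/100:ℝ) ^ (i+j) * X := by rw [← hId]; exact hUV

lemma bound_all (i j : ℕ) :
    ((i+j).choose j : ℝ) * ((2*(i+j)).choose i : ℝ) * ((3*i+2*j).choose (i+j) : ℝ)
      ≤ (4009/100:ℝ) ^ (i+j) := by
  rcases le_or_gt (1000*j) (165*(i+j)) with h | h
  · exact term_bound (41/500) (459/1000) (343/1000) (by norm_num) (by norm_num) (by norm_num)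
      (by norm_num) (by norm_num) (by norm_num) 0 165 (by norm_num) (by norm_num)
      (by rw [show 1000 - 0 = 4 * 250 from rfl, pow_mul]; norm_num) (by rw [show 1000 - 165 = 5 * 167 from rfl, pow_mul]; norm_num) i j (by omega) h
  · rcases le_or_gt (1000*j) (376*(i+j)) with h2 | h2
    · exact term_bound (27/100) (73/200) (183/500) (by norm_num) (by norm_num) (by norm_num)
        (by norm_num) (by norm_num) (by norm_num) 165 376 (by norm_num) (by norm_num)
        (by rw [show 1000 - 165 = 5 * 167 from rfl, pow_mul]; norm_num)
        (by rw [show 1000 - 376 = 4 * 156 from rfl, show 376 = 2 * 188 from rfl, pow_mul, pow_mul]; norm_num) i j (by omega) h2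
    · rcases le_or_gt (1000*j) (602*(i+j)) with h3 | h3
      · exact term_bound (489/1000) (32/125) (199/500) (by norm_num) (by norm_num) (by norm_num)
          (by norm_num) (by norm_num) (by norm_num) 376 602 (by norm_num) (by norm_num)
          (by rw [show 1000 - 376 = 4 * 156 from rfl, show 376 = 2 * 188 from rfl, pow_mul, pow_mul]; norm_num)
          (by rw [show 1000 - 602 = 2 * 199 from rfl, show 602 = 7 * 86 from rfl, pow_mul, pow_mul]; norm_num) i j (by omega) h3
      · exact term_bound (801/1000) (99/1000) (91/200) (by norm_num) (by norm_num) (by norm_num)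
          (by norm_num) (by norm_num) (by norm_num) 602 1000 (by norm_num) (by norm_num)
          (by rw [show 1000 - 602 = 2 * 199 from rfl, show 602 = 7 * 86 from rfl, pow_mul, pow_mul]; norm_num)
          (by rw [show 1000 - 1000 = 0 from rfl, show 1000 = 4 * 250 from rfl, pow_mul]; norm_num) i j (by omega) (by omega)

lemma ratio_up (n k : ℕ) (h : 2*(k+1) ≤ n - k) : 2 * n.choose k ≤ n.choose (k+1) := by
  have h2 : n.choose (k+1) * (k+1) = n.choose k * (n - k) := Nat.choose_succ_right_eq n k
  have h3 : 2 * n.choose k * (k+1) ≤ n.choose (k+1) * (k+1) := by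
    rw [h2]
    calc 2 * n.choose k * (k+1) = n.choose k * (2*(k+1)) := by ring
      _ ≤ n.choose k * (n-k) := Nat.mul_le_mul_left _ h
  exact Nat.le_of_mul_le_mul_right h3 (Nat.succ_pos k)

lemma ratio_down (n k : ℕ) (h : n - k ≤ 2*(k+1)) : n.choose (k+1) ≤ 2 * n.choose k := by
  have h2 : n.choose (k+1) * (k+1) = n.choose k * (n - k) := Nat.choose_succ_right_eq n k
  have h3 : n.choose (k+1) * (k+1) ≤ 2 * n.choose k * (k+1) := by
    rw [h2]
    calc n.choose k * (n-k) ≤ n.choose k * (2*(k+1)) := Nat.mul_le_mul_left _ h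
      _ = 2 * n.choose k * (k+1) := by ring
  exact Nat.le_of_mul_le_mul_right h3 (Nat.succ_pos k)

lemma central_max (m : ℕ) : ∀ i ≤ 3*m,
    (3*m).choose i * 2^(3*m - i) ≤ (3*m).choose m * 2^(2*m) := by
  have fstep_up : ∀ k, k < m → (3*m).choose k * 2^(3*m-k) ≤ (3*m).choose (k+1) * 2^(3*m-(k+1)) := by
    intro k hk
    have e : 3*m - k = (3*m - (k+1)) + 1 := by omega
    rw [e, pow_succ]
    calc (3*m).choose k * (2^(3*m-(k+1)) * 2) = (2 * (3*m).choose k) * 2^(3*m-(k+1)) := by ring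
      _ ≤ (3*m).choose (k+1) * 2^(3*m-(k+1)) :=
        Nat.mul_le_mul_right _ (ratio_up (3*m) k (by omega))
  have fstep_down : ∀ k, m ≤ k → k < 3*m →
      (3*m).choose (k+1) * 2^(3*m-(k+1)) ≤ (3*m).choose k * 2^(3*m-k) := by
    intro k hk hk3
    have e : 3*m - k = (3*m - (k+1)) + 1 := by omega
    rw [e, pow_succ]
    calc (3*m).choose (k+1) * 2^(3*m-(k+1)) ≤ (2 * (3*m).choose k) * 2^(3*m-(k+1)) :=
        Nat.mul_le_mul_right _ (ratio_down (3*m) k (by omega))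
      _ = (3*m).choose k * (2^(3*m-(k+1)) * 2) := by ring
  have up : ∀ l, l ≤ m → ∀ k, k ≤ l →
      (3*m).choose k * 2^(3*m-k) ≤ (3*m).choose l * 2^(3*m-l) := by
    intro l
    induction l with
    | zero =>
      intro _ k hk
      have hk0 : k = 0 := by omega
      subst hk0
      exact le_refl _
    | succ l ih =>
      intro hl k hk
      rcases Nat.eq_or_lt_of_le hk with rfl | h
      · exact le_refl _
      · exact (ih (by omega) k (by omega)).trans (fstep_up l (by omega))
  have down : ∀ l, m ≤ l → l ≤ 3*m → (3*m).choose l * 2^(3*m-l) ≤ (3*m).choose m * 2^(2*m) := by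
    intro l
    induction l with
    | zero =>
      intro h1 _
      have hm : m = 0 := by omega
      subst hm
      exact le_refl _
    | succ l ih =>
      intro h1 h2
      rcases Nat.eq_or_lt_of_le h1 with e | h
      · subst e
        have e2 : 3*(l+1) - (l+1) = 2*(l+1) := by omega
        rw [e2]
      · exact (fstep_down l (by omega) (by omega)).trans (ih (by omega) (by omega))
  intro i hi
  rcases Nat.le_total i m with h | h
  · have := up m le_rfl i h
    have e : 3*m - m = 2*m := by omega
    rwa [e] at this
  · exact down i h hi

lemma central_lower (m : ℕ) : 3^(3*m) ≤ (3*m+1) * ((3*m).choose m * 2^(2*m)) := by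
  have h : (3:ℕ)^(3*m) = ∑ i ∈ Finset.range (3*m+1), 2^(3*m-i) * (3*m).choose i := by
    have := add_pow (1:ℕ) 2 (3*m)
    norm_num at this
    exact this
  rw [h]
  have := Finset.sum_le_card_nsmul (Finset.range (3*m+1))
    (fun i => 2^(3*m-i) * (3*m).choose i) ((3*m).choose m * 2^(2*m))
    (by
      intro i hi
      show 2 ^ (3 * m - i) * (3 * m).choose i ≤ (3 * m).choose m * 2 ^ (2 * m)
      rw [Nat.mul_comm (2^(3*m-i)) ((3*m).choose i)]
      exact central_max m i (Nat.lt_succ_iff.mp (Finset.mem_range.mp hi)))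
  simpa [Finset.card_range, mul_comm] using this

lemma poly_le_geom : ∃ N : ℕ, ∀ m : ℕ, N ≤ m →
    ((m:ℝ)+1)*(3*(m:ℝ)+1)^2 ≤ (8019/8018:ℝ)^m := by
  have hnorm : ‖(8018/8019:ℝ)‖ < 1 := by
    rw [Real.norm_eq_abs, abs_of_pos (by norm_num)]; norm_num
  have hsum : Summable (fun n : ℕ => ((n:ℝ))^3 * (8018/8019:ℝ)^n) :=
    (summable_norm_pow_mul_geometric_of_norm_lt_one 3 hnorm).of_norm
  have ht := hsum.tendsto_atTop_zero
  have hev : ∀ᶠ n : ℕ in Filter.atTop, ((n:ℝ))^3 * (8018/8019:ℝ)^n < 1/33 :=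
    ht.eventually_lt_const (by norm_num)
  obtain ⟨N, hN⟩ := Filter.eventually_atTop.mp hev
  refine ⟨max N 1, fun m hm => ?_⟩
  have hm1 : 1 ≤ m := le_trans (le_max_right N 1) hm
  have hmN : N ≤ m := le_trans (le_max_left N 1) hm
  have hf := hN m hmN
  have hm1' : (1:ℝ) ≤ (m:ℝ) := by exact_mod_cast hm1
  have hprod : (8018/8019:ℝ)^m * (8019/8018:ℝ)^m = 1 := by
    rw [← mul_pow]; norm_num
  have hpos : (0:ℝ) < (8019/8018:ℝ)^m := by positivity
  have key : (m:ℝ)^3 < (1/33) * (8019/8018:ℝ)^m := by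
    have := mul_lt_mul_of_pos_right hf hpos
    calc (m:ℝ)^3 = ((m:ℝ)^3 * (8018/8019:ℝ)^m) * (8019/8018:ℝ)^m := by
          rw [mul_assoc, hprod, mul_one]
      _ < (1/33) * (8019/8018:ℝ)^m := this
  have hA : (m:ℝ) ≤ (m:ℝ)^2 := by nlinarith [hm1']
  have hB : (m:ℝ)^2 ≤ (m:ℝ)^3 := by nlinarith [hm1']
  nlinarith [key, hA, hB, hm1']

theorem prob_bound_q3 :
    ∃ N : ℕ, ∀ m : ℕ, N ≤ m →
      (((Finset.range (m + 1)).sum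
          (fun j => (m.choose j) * ((2 * m).choose (m - j)) * ((3 * m - j).choose m)) : ℕ) : ℝ) ≤
        (0.88 : ℝ) ^ m * (((3 * m).choose m : ℝ)) ^ 2 := by
  obtain ⟨N, hN⟩ := poly_le_geom
  refine ⟨N, fun m hm => ?_⟩
  set C : ℝ := ((3 * m).choose m : ℝ) with hC
  -- termwise bound
  have hterm : ∀ j ∈ Finset.range (m+1),
      ((m.choose j : ℝ) * ((2 * m).choose (m - j) : ℝ) * ((3 * m - j).choose m : ℝ))
        ≤ (4009/100:ℝ) ^ m := by
    intro j hj
    have hjm : j ≤ m := Nat.lt_succ_iff.mp (Finset.mem_range.mp hj)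
    obtain ⟨i, rfl⟩ : ∃ i, m = i + j := ⟨m - j, by omega⟩
    have e1 : i + j - j = i := by omega
    have e2 : 3 * (i + j) - j = 3*i + 2*j := by omega
    have e3 : 2 * (i + j) = 2*(i+j) := rfl
    rw [e1, e2]
    exact bound_all i j
  -- sum bound
  have hsum : (((Finset.range (m + 1)).sum
      (fun j => (m.choose j) * ((2 * m).choose (m - j)) * ((3 * m - j).choose m)) : ℕ) : ℝ)
      ≤ ((m:ℝ)+1) * (4009/100:ℝ) ^ m := by
    push_cast
    calc (∑ j ∈ Finset.range (m+1),
          (m.choose j : ℝ) * ((2 * m).choose (m - j) : ℝ) * ((3 * m - j).choose m : ℝ))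
        ≤ (Finset.range (m+1)).card • (4009/100:ℝ) ^ m :=
          Finset.sum_le_card_nsmul _ _ _ hterm
      _ = ((m:ℝ)+1) * (4009/100:ℝ) ^ m := by
          rw [Finset.card_range, nsmul_eq_mul]
          push_cast
          ring
  -- lower bound for central coefficient
  have hcl : ((27:ℝ))^m ≤ (3*(m:ℝ)+1) * C * 4^m := by
    have := central_lower m
    have hcast : ((3:ℝ))^(3*m) ≤ ((3*m+1 : ℕ):ℝ) * (C * 2^(2*m)) := by
      rw [hC]
      exact_mod_cast this
    calc ((27:ℝ))^m = (3:ℝ)^(3*m) := by rw [pow_mul]; norm_num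
      _ ≤ ((3*m+1 : ℕ):ℝ) * (C * 2^(2*m)) := hcast
      _ = (3*(m:ℝ)+1) * C * (2:ℝ)^(2*m) := by push_cast; ring
      _ = (3*(m:ℝ)+1) * C * 4^m := by rw [pow_mul]; norm_num
  have hCpos : 0 ≤ C := by rw [hC]; positivity
  have hsq : ((729:ℝ))^m ≤ (3*(m:ℝ)+1)^2 * C^2 * 16^m := by
    have h27 : (0:ℝ) ≤ (27:ℝ)^m := by positivity
    have := mul_le_mul hcl hcl h27 (by positivity)
    calc ((729:ℝ))^m = (27:ℝ)^m * (27:ℝ)^m := by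
          rw [← mul_pow]; norm_num
      _ ≤ ((3*(m:ℝ)+1) * C * 4^m) * ((3*(m:ℝ)+1) * C * 4^m) := this
      _ = (3*(m:ℝ)+1)^2 * C^2 * (4^m * 4^m) := by ring
      _ = (3*(m:ℝ)+1)^2 * C^2 * 16^m := by
          rw [show (16:ℝ) = 4*4 by norm_num, mul_pow]
  -- final combination
  have hpoly := hN m hm
  have hfac : (0:ℝ) < (3*(m:ℝ)+1)^2 * 16^m := by positivity
  have main : ((m:ℝ)+1) * (4009/100:ℝ)^m ≤ (0.88:ℝ)^m * C^2 := by
    apply le_of_mul_le_mul_right _ hfac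
    calc ((m:ℝ)+1) * (4009/100:ℝ)^m * ((3*(m:ℝ)+1)^2 * 16^m)
        = (((m:ℝ)+1) * (3*(m:ℝ)+1)^2) * ((4009/100:ℝ)^m * 16^m) := by ring
      _ ≤ (8019/8018:ℝ)^m * ((4009/100:ℝ)^m * 16^m) := by
          apply mul_le_mul_of_nonneg_right hpoly (by positivity)
      _ = ((8019/8018:ℝ) * ((4009/100) * 16))^m := by
          rw [← mul_pow, ← mul_pow]
      _ = ((0.88:ℝ) * 729)^m := by norm_num
      _ = (0.88:ℝ)^m * (729:ℝ)^m := by rw [mul_pow]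
      _ ≤ (0.88:ℝ)^m * ((3*(m:ℝ)+1)^2 * C^2 * 16^m) := by
          apply mul_le_mul_of_nonneg_left hsq (by positivity)
      _ = (0.88:ℝ)^m * C^2 * ((3*(m:ℝ)+1)^2 * 16^m) := by ring
  exact hsum.trans main
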